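/- For every positive integer n, the 2×n grid graph has twin-width 2 if and only if n >= 4; moreover the 2×n grid has twin-width at most 2 for every n >= 2. -/

import Mathlib

namespace TwwPaper

open Finset

/-! ### Twin-width via contraction (partition-merge) sequences -/

/-- Two parts `P`, `Q` are *pure* (homogeneous) in `G`: the graph is either complete or empty
between them.  In the trigraph of a partition, a non-pure pair of parts is joined by a red edge. -/
def Pure {V : Type*} (G : SimpleGraph V) (P Q : Finset V) : Prop :=
  (∀ x ∈ P, ∀ y ∈ Q, G.Adj x y) ∨ (∀ x ∈ P, ∀ y ∈ Q, ¬ G.Adj x y)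

/-- The red degree of a part `P` in the partition `PP`: the number of other parts that are
not pure with respect to `P`. -/
noncomputable def redDeg {V : Type*} (G : SimpleGraph V) (PP : Finset (Finset V)) (P : Finset V) : ℕ :=
  {Q | Q ∈ PP ∧ Q ≠ P ∧ ¬ Pure G P Q}.ncard

/-- `QQ` is obtained from `PP` by merging (contracting) two parts. -/
def Merge {V : Type*} [DecidableEq V] (PP QQ : Finset (Finset V)) : Prop :=
  ∃ A ∈ PP, ∃ B ∈ PP, A ≠ B ∧ QQ = insert (A ∪ B) ((PP.erase A).erase B)

/-- One contraction step keeping every red degree at most `d`. -/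
def Step {V : Type*} [DecidableEq V] (G : SimpleGraph V) (d : ℕ) (PP QQ : Finset (Finset V)) :
    Prop :=
  Merge PP QQ ∧ ∀ P ∈ QQ, redDeg G QQ P ≤ d

/-- `G` admits a `d`-contraction sequence: starting from the partition into singletons one can
merge two parts at a time, always keeping all red degrees at most `d`, until one part remains. -/
def TwwLE {V : Type*} [Fintype V] [DecidableEq V] (G : SimpleGraph V) (d : ℕ) : Prop :=
  Relation.ReflTransGen (Step G d)
    (Finset.univ.image fun v => ({v} : Finset V)) {Finset.univ}

/-- The twin-width of a finite simple graph. -/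
noncomputable def tww {V : Type*} [Fintype V] [DecidableEq V] (G : SimpleGraph V) : ℕ :=
  sInf {d | TwwLE G d}

/-! ### Minors, separators, subgraph containment -/

/-- `H` is a minor of `G`: there is a minor model, i.e. pairwise disjoint nonempty connected
branch sets, one for each vertex of `H`, with an edge of `G` between the branch sets of any two
adjacent vertices of `H`. -/
def IsMinor {α β : Type*} (H : SimpleGraph α) (G : SimpleGraph β) : Prop :=
  ∃ f : α → Set β,
    (∀ a, (f a).Nonempty) ∧
    (∀ a, (G.induce (f a)).Connected) ∧
    (∀ a b, a ≠ b → Disjoint (f a) (f b)) ∧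
    ∀ a b, H.Adj a b → ∃ x ∈ f a, ∃ y ∈ f b, G.Adj x y

/-- `S` is a separator of `G` : deleting `S` leaves a nonempty disconnected graph. -/
def Sep {α : Type*} (G : SimpleGraph α) (S : Set α) : Prop :=
  (Sᶜ : Set α).Nonempty ∧ ¬ (G.induce Sᶜ).Preconnected

/-- `G` contains `F` as a (not necessarily induced) subgraph. -/
def ContainsSubgraph {α β : Type*} (G : SimpleGraph β) (F : SimpleGraph α) : Prop :=
  ∃ f : α → β, Function.Injective f ∧ ∀ a b, F.Adj a b → G.Adj (f a) (f b)

/-- `G` is internally 4-connected. -/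
def Internally4Connected {α : Type*} [Fintype α] (G : SimpleGraph α) : Prop :=
  5 ≤ Fintype.card α ∧
  (∀ S : Set α, S.ncard < 3 → ¬ Sep G S) ∧
  ∀ S : Set α, S.ncard = 3 → Sep G S →
    (∀ a ∈ S, ∀ b ∈ S, ¬ G.Adj a b) ∧ ∃ v ∉ S, G.neighborSet v = S

/-! ### The concrete graphs -/

/-- `K₆` minus one edge. -/
def K6minus : SimpleGraph (Fin 6) where
  Adj a b := a ≠ b ∧ ¬(({a, b} : Finset (Fin 6)) = {0, 1})
  symm := by
    constructor
    rintro a b ⟨h1, h2⟩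
    exact ⟨h1.symm, by rwa [Finset.pair_comm]⟩
  loopless := ⟨fun a h => h.1 rfl⟩

/-- The complement of the 7-cycle. -/
def C7c : SimpleGraph (Fin 7) := (SimpleGraph.cycleGraph 7)ᶜ

/-- Join of two graphs. -/
def joinG {α β : Type*} (G : SimpleGraph α) (H : SimpleGraph β) : SimpleGraph (α ⊕ β) where
  Adj x y :=
    match x, y with
    | Sum.inl a, Sum.inl b => G.Adj a b
    | Sum.inr a, Sum.inr b => H.Adj a b
    | _, _ => True
  symm := by
    constructor
    rintro (a | a) (b | b) h
    · exact G.symm.symm _ _ h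
    · exact trivial
    · exact trivial
    · exact H.symm.symm _ _ h
  loopless := by
    constructor
    rintro (a | a) h
    · exact G.loopless.irrefl a h
    · exact H.loopless.irrefl a h

/-- The join of `C₅` with the complement of `K₂` (two isolated vertices). -/
def C5K2c : SimpleGraph (Fin 5 ⊕ Fin 2) :=
  joinG (SimpleGraph.cycleGraph 5) (⊥ : SimpleGraph (Fin 2))

/-- The part of a vertex of `K_{3,1,3}`: `{0,1,2}`, `{3}`, `{4,5,6}`. -/
def triPart : Fin 7 → ℕ := fun a => if a.val < 3 then 0 else if a.val = 3 then 1 else 2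

/-- `K_{3,1̂,3}`: the complete tripartite graph `K_{3,1,3}` minus one edge from the middle
vertex `3` to each of the two size-3 parts (the edges `{0,3}` and `{3,4}`). -/
def K313hat : SimpleGraph (Fin 7) where
  Adj a b := triPart a ≠ triPart b ∧ ¬(({a, b} : Finset (Fin 7)) = {0, 3}) ∧
    ¬(({a, b} : Finset (Fin 7)) = {3, 4})
  symm := by
    constructor
    rintro a b ⟨h1, h2, h3⟩
    refine ⟨h1.symm, ?_, ?_⟩ <;> rwa [Finset.pair_comm]
  loopless := ⟨fun a h => h.1 rfl⟩

/-- The cube graph `Q₃`. -/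
def Q3 : SimpleGraph (Fin 2 × Fin 2 × Fin 2) where
  Adj x y := (x.1 ≠ y.1 ∧ x.2 = y.2) ∨ (x.1 = y.1 ∧ x.2.1 ≠ y.2.1 ∧ x.2.2 = y.2.2) ∨
    (x.1 = y.1 ∧ x.2.1 = y.2.1 ∧ x.2.2 ≠ y.2.2)
  symm := by
    constructor
    rintro x y (⟨h1, h2⟩ | ⟨h1, h2, h3⟩ | ⟨h1, h2, h3⟩)
    · exact Or.inl ⟨h1.symm, h2.symm⟩
    · exact Or.inr (Or.inl ⟨h1.symm, h2.symm, h3.symm⟩)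
    · exact Or.inr (Or.inr ⟨h1.symm, h2.symm, h3.symm⟩)
  loopless := by
    constructor
    rintro x (⟨h, -⟩ | ⟨-, h, -⟩ | ⟨-, -, h⟩) <;> exact h rfl

/-- The Wagner graph `V₈`: the 8-cycle plus the four main diagonals. -/
def V8 : SimpleGraph (Fin 8) where
  Adj a b := a ≠ b ∧ (b = a + 1 ∨ a = b + 1 ∨ b = a + 4)
  symm := by
    constructor
    rintro a b ⟨h, h1 | h1 | h1⟩
    · exact ⟨h.symm, Or.inr (Or.inl h1)⟩
    · exact ⟨h.symm, Or.inl h1⟩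
    · refine ⟨h.symm, Or.inr (Or.inr ?_)⟩
      subst h1
      have h4 : (4 : Fin 8) + 4 = 0 := by decide
      rw [add_assoc, h4, add_zero]
  loopless := by constructor; rintro a ⟨h, -⟩; exact h rfl

/-- `K₆` minus a perfect matching (`K₆^≡`), i.e. the octahedron `K_{2,2,2}`. -/
def K6mm3 : SimpleGraph (Fin 6) where
  Adj a b := a.val % 3 ≠ b.val % 3
  symm := ⟨fun _ _ h => h.symm⟩
  loopless := ⟨fun _ h => h rfl⟩

/-- `K₆` minus a matching of size two (`K₆^=`). -/
def K6mm2 : SimpleGraph (Fin 6) where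
  Adj a b := a ≠ b ∧ ¬(({a, b} : Finset (Fin 6)) = {0, 3}) ∧
    ¬(({a, b} : Finset (Fin 6)) = {1, 4})
  symm := by
    constructor
    rintro a b ⟨h1, h2, h3⟩
    refine ⟨h1.symm, ?_, ?_⟩ <;> rwa [Finset.pair_comm]
  loopless := ⟨fun a h => h.1 rfl⟩

/-- The join of the complement of `C₆` with a single vertex. -/
def C6cK1 : SimpleGraph (Fin 6 ⊕ Fin 1) :=
  joinG ((SimpleGraph.cycleGraph 6)ᶜ) (⊥ : SimpleGraph (Fin 1))

/-- A perfect matching graph on `Fin m` (`m` even): `2i` is matched to `2i+1`. -/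
def matchingGraph (m : ℕ) : SimpleGraph (Fin m) where
  Adj a b := a ≠ b ∧ a.val / 2 = b.val / 2
  symm := ⟨fun _ _ h => ⟨h.1.symm, h.2.symm⟩⟩
  loopless := ⟨fun _ h => h.1 rfl⟩

/-- The `m × n` grid graph. -/
def gridGraph (m n : ℕ) : SimpleGraph (Fin m × Fin n) where
  Adj p q := (p.1 = q.1 ∧ (p.2.val + 1 = q.2.val ∨ q.2.val + 1 = p.2.val)) ∨
    (p.2 = q.2 ∧ (p.1.val + 1 = q.1.val ∨ q.1.val + 1 = p.1.val))
  symm := by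
    constructor
    rintro p q (⟨h1, h2⟩ | ⟨h1, h2⟩)
    · exact Or.inl ⟨h1.symm, h2.symm⟩
    · exact Or.inr ⟨h1.symm, h2.symm⟩
  loopless := by constructor; rintro p (⟨-, h | h⟩ | ⟨-, h | h⟩) <;> omega

/-! ### `(Δ,Y)`-operation -/

/-- The `(Δ,Y)`-operation on the triangle `{x,y,z}` of `G`: delete the edges of the triangle
and add a new vertex (`none`) adjacent exactly to `x`, `y`, `z`. -/
def deltaY {α : Type*} (G : SimpleGraph α) (x y z : α) : SimpleGraph (Option α) where
  Adj a b :=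
    match a, b with
    | some a, some b => G.Adj a b ∧ ¬((a = x ∨ a = y ∨ a = z) ∧ (b = x ∨ b = y ∨ b = z))
    | some a, none => a = x ∨ a = y ∨ a = z
    | none, some b => b = x ∨ b = y ∨ b = z
    | none, none => False
  symm := by
    constructor
    rintro (_ | a) (_ | b) h
    · exact h.elim
    · exact h
    · exact h
    · exact ⟨h.1.symm, fun hc => h.2 ⟨hc.2, hc.1⟩⟩
  loopless := by
    constructor
    rintro (_ | a) h
    · exact h
    · exact G.loopless.irrefl a h.1

/-- `G` has a spanning subgraph isomorphic to a member of
`𝓕₃ = {K₆⁻, C₇ᶜ, C₅ + K₂ᶜ, K_{3,1̂,3}, Q₃, V₈}`. -/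
def HasSpanningF3 {α : Type*} (G : SimpleGraph α) : Prop :=
  ∃ H : SimpleGraph α, H ≤ G ∧
    (Nonempty (H ≃g K6minus) ∨ Nonempty (H ≃g C7c) ∨ Nonempty (H ≃g C5K2c) ∨
      Nonempty (H ≃g K313hat) ∨ Nonempty (H ≃g Q3) ∨ Nonempty (H ≃g V8))

/-- `G` has a minor in `𝓕₃`. -/
def HasF3Minor {α : Type*} (G : SimpleGraph α) : Prop :=
  IsMinor K6minus G ∨ IsMinor C7c G ∨ IsMinor C5K2c G ∨ IsMinor K313hat G ∨
    IsMinor Q3 G ∨ IsMinor V8 G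

/-! ### Subdivisions -/

/-- Vertices of the subdivision of `G` in which the edge `ab` (with `a < b`) receives
`ℓ a b` internal (subdivision) vertices: the original vertices plus, for each oriented edge,
`ℓ a b` new vertices. -/
def SubdivVert {α : Type*} [LT α] (G : SimpleGraph α) (ℓ : α → α → ℕ) : Type _ :=
  α ⊕ Σ e : {p : α × α // p.1 < p.2 ∧ G.Adj p.1 p.2}, Fin (ℓ e.1.1 e.1.2)

noncomputable instance SubdivVert.instFintype {α : Type*} [LT α] [Fintype α]
    (G : SimpleGraph α) (ℓ : α → α → ℕ) : Fintype (SubdivVert G ℓ) := by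
  classical
  unfold SubdivVert
  infer_instance

noncomputable instance SubdivVert.instDecidableEq {α : Type*} [LT α] [DecidableEq α]
    (G : SimpleGraph α) (ℓ : α → α → ℕ) : DecidableEq (SubdivVert G ℓ) := by
  classical
  unfold SubdivVert
  infer_instance

/-- The subdivision of `G` in which each edge `ab` (`a < b`) is replaced by a path with
`ℓ a b` internal vertices (so of length `ℓ a b + 1`); an edge with `ℓ a b = 0` stays an edge. -/
def Subdiv {α : Type*} [LT α] (G : SimpleGraph α) (ℓ : α → α → ℕ) :
    SimpleGraph (SubdivVert G ℓ) where
  Adj x y :=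
    match x, y with
    | Sum.inl a, Sum.inl b =>
        G.Adj a b ∧ ((a < b ∧ ℓ a b = 0) ∨ (b < a ∧ ℓ b a = 0))
    | Sum.inl a, Sum.inr ei =>
        (a = ei.1.1.1 ∧ (ei.2 : ℕ) = 0) ∨ (a = ei.1.1.2 ∧ (ei.2 : ℕ) + 1 = ℓ ei.1.1.1 ei.1.1.2)
    | Sum.inr ei, Sum.inl a =>
        (a = ei.1.1.1 ∧ (ei.2 : ℕ) = 0) ∨ (a = ei.1.1.2 ∧ (ei.2 : ℕ) + 1 = ℓ ei.1.1.1 ei.1.1.2)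
    | Sum.inr ei, Sum.inr ej =>
        ei.1 = ej.1 ∧ ((ei.2 : ℕ) + 1 = (ej.2 : ℕ) ∨ (ej.2 : ℕ) + 1 = (ei.2 : ℕ))
  symm := by
    constructor
    rintro (a | ei) (b | ej) h
    · exact ⟨h.1.symm, h.2.symm⟩
    · exact h
    · exact h
    · exact ⟨h.1.symm, h.2.symm⟩
  loopless := by
    constructor
    rintro (a | ei) h
    · exact G.loopless.irrefl a h.1
    · rcases h.2 with h' | h' <;> omega

/-- Lexicographic order on the vertex set of a grid, used to orient its edges. -/
def lexLT {m n : ℕ} : LT (Fin m × Fin n) :=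
  ⟨fun p q => p.1 < q.1 ∨ (p.1 = q.1 ∧ p.2 < q.2)⟩



/-! basic lemmas -/
section Basic
variable {V : Type*} [DecidableEq V]

omit [DecidableEq V] in
lemma pure_singleton (G : SimpleGraph V) (x y : V) : Pure G {x} {y} := by
  by_cases h : G.Adj x y
  · exact Or.inl (by simpa using h)
  · exact Or.inr (by simpa using h)

instance Pure.dec (G : SimpleGraph V) [DecidableRel G.Adj] (P Q : Finset V) :
    Decidable (Pure G P Q) :=
  inferInstanceAs (Decidable ((∀ x ∈ P, ∀ y ∈ Q, G.Adj x y) ∨ (∀ x ∈ P, ∀ y ∈ Q, ¬ G.Adj x y)))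

instance Merge.dec (PP QQ : Finset (Finset V)) : Decidable (Merge PP QQ) :=
  inferInstanceAs (Decidable
    (∃ A ∈ PP, ∃ B ∈ PP, A ≠ B ∧ QQ = insert (A ∪ B) ((PP.erase A).erase B)))

lemma redDeg_eq_card (G : SimpleGraph V) [DecidableRel G.Adj] (PP : Finset (Finset V))
    (P : Finset V) :
    redDeg G PP P = (PP.filter fun Q => Q ≠ P ∧ ¬ Pure G P Q).card := by
  rw [redDeg, show {Q | Q ∈ PP ∧ Q ≠ P ∧ ¬ Pure G P Q}
      = ↑(PP.filter fun Q => Q ≠ P ∧ ¬ Pure G P Q) by ext Q; simp,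
    Set.ncard_coe_finset]

lemma redDeg_le_of (G : SimpleGraph V) (PP : Finset (Finset V)) (P : Finset V)
    (T : Finset (Finset V)) (hT : ∀ Q ∈ PP, Q ≠ P → ¬ Pure G P Q → Q ∈ T) :
    redDeg G PP P ≤ T.card := by
  classical
  rw [redDeg_eq_card]
  refine Finset.card_le_card ?_
  intro Q hQ
  simp only [Finset.mem_filter] at hQ
  exact hT Q hQ.1 hQ.2.1 hQ.2.2

def StepB (G : SimpleGraph V) [DecidableRel G.Adj] (d : ℕ) (PP QQ : Finset (Finset V)) : Prop :=
  Merge PP QQ ∧ ∀ P ∈ QQ, (QQ.filter fun Q => Q ≠ P ∧ ¬ Pure G P Q).card ≤ d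

instance StepB.dec (G : SimpleGraph V) [DecidableRel G.Adj] (d : ℕ) (PP QQ : Finset (Finset V)) :
    Decidable (StepB G d PP QQ) :=
  inferInstanceAs (Decidable (Merge PP QQ ∧
    ∀ P ∈ QQ, (QQ.filter fun Q => Q ≠ P ∧ ¬ Pure G P Q).card ≤ d))

lemma step_iff_stepB (G : SimpleGraph V) [DecidableRel G.Adj] (d : ℕ)
    (PP QQ : Finset (Finset V)) : Step G d PP QQ ↔ StepB G d PP QQ := by
  unfold Step StepB
  exact and_congr_right fun _ => forall₂_congr fun P _ => by rw [redDeg_eq_card]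

lemma rtg_of_chain {α : Type*} {R : α → α → Prop} (L : List α) (a b : α)
    (hc : List.Chain R a L) (hl : (a :: L).getLast (List.cons_ne_nil a L) = b) :
    Relation.ReflTransGen R a b := by
  induction L generalizing a with
  | nil => simp at hl; subst hl; exact .refl
  | cons c L ih =>
    rcases List.chain_cons.1 hc with ⟨h1, h2⟩
    refine Relation.ReflTransGen.head h1 (ih c h2 ?_)
    rw [← hl, List.getLast_cons (List.cons_ne_nil _ _)]

lemma twwLE_of_chain {V : Type*} [Fintype V] [DecidableEq V] (G : SimpleGraph V)
    [DecidableRel G.Adj] (d : ℕ) (L : List (Finset (Finset V)))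
    (hc : List.Chain (StepB G d) (Finset.univ.image fun v => ({v} : Finset V)) L)
    (hl : ((Finset.univ.image fun v => ({v} : Finset V)) :: L).getLast
      (List.cons_ne_nil _ _) = {Finset.univ}) : TwwLE G d :=
  rtg_of_chain L _ _ (List.Chain.imp (fun _ _ h => (step_iff_stepB G d _ _).mpr h) hc) hl

lemma twwLE_mono {V : Type*} [Fintype V] [DecidableEq V] {G : SimpleGraph V} {d d' : ℕ}
    (h : d ≤ d') : TwwLE G d → TwwLE G d' :=
  fun hh => hh.lift (p := Step G d') id
    (fun _ _ (hs : Step G d _ _) => ⟨hs.1, fun P hP => (hs.2 P hP).trans h⟩)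

lemma tww_le {V : Type*} [Fintype V] [DecidableEq V] {G : SimpleGraph V} {d : ℕ}
    (h : TwwLE G d) : tww G ≤ d := Nat.sInf_le h

lemma tww_eq_two {V : Type*} [Fintype V] [DecidableEq V] {G : SimpleGraph V}
    (h2 : TwwLE G 2) (h1 : ¬ TwwLE G 1) : tww G = 2 := by
  refine le_antisymm (Nat.sInf_le h2) ?_
  by_contra hlt
  push_neg at hlt
  have hmem : TwwLE G (tww G) := Nat.sInf_mem (⟨2, h2⟩ : {d | TwwLE G d}.Nonempty)
  exact h1 (twwLE_mono (by omega) hmem)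

end Basic

/-! grid adjacency -/
lemma grid_adj_iff {m n : ℕ} (p q : Fin m × Fin n) : (gridGraph m n).Adj p q ↔
    ((p.1 = q.1 ∧ (p.2.val + 1 = q.2.val ∨ q.2.val + 1 = p.2.val)) ∨
      (p.2 = q.2 ∧ (p.1.val + 1 = q.1.val ∨ q.1.val + 1 = p.1.val))) := Iff.rfl

instance gridAdj.dec {m n : ℕ} : DecidableRel (gridGraph m n).Adj := fun p q =>
  decidable_of_iff' _ (grid_adj_iff p q)

lemma grid_adj_val {m n : ℕ} (p q : Fin m × Fin n) : (gridGraph m n).Adj p q ↔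
    ((p.1.val = q.1.val ∧ (p.2.val + 1 = q.2.val ∨ q.2.val + 1 = p.2.val)) ∨
      (p.2.val = q.2.val ∧ (p.1.val + 1 = q.1.val ∨ q.1.val + 1 = p.1.val))) := by
  rw [grid_adj_iff]; simp [Fin.ext_iff]


/-! ### Upper bound: column sweep for the 2×n grid -/
section Upper
variable {n : ℕ}

def blob (n k : ℕ) : Finset (Fin 2 × Fin n) := Finset.univ.filter fun p => p.2.val < k

def rest (n k : ℕ) : Finset (Fin 2 × Fin n) := Finset.univ.filter fun p => k ≤ p.2.val

def P1 (n k : ℕ) : Finset (Finset (Fin 2 × Fin n)) :=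
  insert (blob n k) ((rest n k).image fun v => {v})

def hb (n : ℕ) (k : Fin n) : Finset (Fin 2 × Fin n) := blob n k.val ∪ {(0, k)}

def P2 (n : ℕ) (k : Fin n) : Finset (Finset (Fin 2 × Fin n)) :=
  insert (hb n k) (((rest n k.val).erase (0, k)).image fun v => {v})

lemma mem_blob {k : ℕ} {p : Fin 2 × Fin n} : p ∈ blob n k ↔ p.2.val < k := by
  simp [blob]

lemma mem_rest {k : ℕ} {p : Fin 2 × Fin n} : p ∈ rest n k ↔ k ≤ p.2.val := by
  simp [rest]

lemma mem_hb {k : Fin n} {p : Fin 2 × Fin n} :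
    p ∈ hb n k ↔ p.2.val < k.val ∨ (p.1.val = 0 ∧ p.2.val = k.val) := by
  simp only [hb, Finset.mem_union, mem_blob, Finset.mem_singleton, Prod.ext_iff, Fin.ext_iff,
    Fin.val_zero]

lemma eq_pair_iff {i : Fin 2} {j : Fin n} {p : Fin 2 × Fin n} :
    p = (i, j) ↔ p.1.val = i.val ∧ p.2.val = j.val := by
  simp [Prod.ext_iff, Fin.ext_iff]

lemma blob_not_mem_image {k : ℕ} (hk : 0 < k) (hn : 0 < n) (s : Finset (Fin 2 × Fin n)) :
    blob n k ∉ s.image fun v => ({v} : Finset (Fin 2 × Fin n)) := by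
  intro h
  obtain ⟨v, -, hv⟩ := Finset.mem_image.1 h
  have h0 : ((0 : Fin 2), (⟨0, hn⟩ : Fin n)) ∈ blob n k := mem_blob.2 (by simpa using hk)
  have h1 : ((1 : Fin 2), (⟨0, hn⟩ : Fin n)) ∈ blob n k := mem_blob.2 (by simpa using hk)
  rw [← hv, Finset.mem_singleton] at h0 h1
  have := h0.trans h1.symm
  simp [Prod.ext_iff] at this

lemma hb_not_mem_image (k : Fin n) (s : Finset (Fin 2 × Fin n)) :
    hb n k ∉ (s.erase (0, k)).image fun v => ({v} : Finset (Fin 2 × Fin n)) := by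
  intro h
  obtain ⟨v, hv1, hv⟩ := Finset.mem_image.1 h
  have hk : ((0 : Fin 2), k) ∈ hb n k := by
    rw [mem_hb]; exact Or.inr ⟨rfl, rfl⟩
  rw [← hv, Finset.mem_singleton] at hk
  exact (Finset.mem_erase.1 hv1).1 hk.symm

lemma hb_union (k : Fin n) : hb n k ∪ {((1 : Fin 2), k)} = blob n (k.val + 1) := by
  ext p
  have h1 := p.1.isLt
  rw [Finset.mem_union, Finset.mem_singleton, mem_hb, mem_blob, eq_pair_iff]
  simp only [Fin.val_one]
  omega

lemma rest_erase (k : Fin n) :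
    (((rest n k.val).erase (0, k)).erase (1, k)) = rest n (k.val + 1) := by
  ext p
  have h1 := p.1.isLt
  rw [Finset.mem_erase, Finset.mem_erase, mem_rest, mem_rest, Ne, eq_pair_iff, Ne, eq_pair_iff]
  simp only [Fin.val_one, Fin.val_zero]
  omega

lemma P1_zero_ne (k : Fin n) : ((0 : Fin 2), k) ∈ rest n k.val := mem_rest.2 le_rfl

lemma P1_last : P1 n n = {Finset.univ} := by
  have h1 : rest n n = ∅ := by
    rw [Finset.eq_empty_iff_forall_notMem]
    intro p hp
    exact absurd (mem_rest.1 hp) (by have := p.2.isLt; omega)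
  have h2 : blob n n = Finset.univ := by
    ext p; simp [mem_blob, p.2.isLt]
  rw [P1, h1, h2, Finset.image_empty, LawfulSingleton.insert_empty_eq]

lemma P2_zero (hn : 0 < n) :
    P2 n ⟨0, hn⟩ = Finset.univ.image fun v => ({v} : Finset (Fin 2 × Fin n)) := by
  have hblob : blob n 0 = ∅ := by
    rw [Finset.eq_empty_iff_forall_notMem]; intro p hp; simpa using mem_blob.1 hp
  have hrest : rest n 0 = Finset.univ := by
    ext p; simp [mem_rest]
  rw [P2, hb, hblob, Finset.empty_union, hrest]
  ext X
  simp only [Finset.mem_insert, Finset.mem_image, Finset.mem_erase, Finset.mem_univ, true_and,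
    and_true]
  constructor
  · rintro (rfl | ⟨v, -, rfl⟩) <;> exact ⟨_, rfl⟩
  · rintro ⟨v, rfl⟩
    by_cases hv : v = ((0 : Fin 2), (⟨0, hn⟩ : Fin n))
    · exact Or.inl (by rw [hv])
    · exact Or.inr ⟨v, hv, rfl⟩


lemma singleton_inj' : Function.Injective (fun v => ({v} : Finset (Fin 2 × Fin n))) :=
  fun _ _ h => Finset.singleton_injective h

lemma redDeg_singleton_le (G : SimpleGraph (Fin 2 × Fin n)) (big : Finset (Fin 2 × Fin n))
    (s : Finset (Fin 2 × Fin n)) (v : Fin 2 × Fin n) :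
    redDeg G (insert big (s.image fun v => {v})) {v} ≤ 1 := by
  refine (redDeg_le_of G _ _ {big} ?_).trans (by simp)
  intro Q hQ hne hnp
  rcases Finset.mem_insert.1 hQ with rfl | hQ
  · exact Finset.mem_singleton_self _
  · obtain ⟨w, -, rfl⟩ := Finset.mem_image.1 hQ
    exact absurd (pure_singleton G v w) hnp

lemma step1 (k : Fin n) : Step (gridGraph 2 n) 2 (P2 n k) (P1 n (k.val + 1)) := by
  constructor
  · refine ⟨hb n k, Finset.mem_insert_self _ _, {((1 : Fin 2), k)}, ?_, ?_, ?_⟩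
    · refine Finset.mem_insert_of_mem (Finset.mem_image.2 ⟨(1, k), Finset.mem_erase.2
        ⟨?_, mem_rest.2 le_rfl⟩, rfl⟩)
      rw [Ne, eq_pair_iff]
      simp
    · intro h
      have h0 : ((0 : Fin 2), k) ∈ hb n k := mem_hb.2 (Or.inr ⟨rfl, rfl⟩)
      rw [h, Finset.mem_singleton, eq_pair_iff] at h0
      simp at h0
    · rw [P2, Finset.erase_insert (hb_not_mem_image k _),
        show ((((rest n k.val).erase (0, k)).image fun v => ({v} : Finset (Fin 2 × Fin n))).erase
            {((1 : Fin 2), k)})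
          = (((rest n k.val).erase (0, k)).erase (1, k)).image
              (fun v => ({v} : Finset (Fin 2 × Fin n)))
          from (Finset.image_erase singleton_inj' _ _).symm,
        rest_erase, hb_union]
      rfl
  · intro P hP
    rcases Finset.mem_insert.1 hP with rfl | hP
    · refine (redDeg_le_of _ _ _
        (((rest n (k.val + 1)).filter fun p => p.2.val = k.val + 1).image fun v => {v}) ?_).trans
        (Finset.card_image_le.trans ?_)
      · intro Q hQ hne hnp
        rcases Finset.mem_insert.1 hQ with rfl | hQ
        · exact absurd rfl hne
        obtain ⟨w, hw, rfl⟩ := Finset.mem_image.1 hQ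
        by_cases hcol : w.2.val = k.val + 1
        · exact Finset.mem_image.2 ⟨w, Finset.mem_filter.2 ⟨hw, hcol⟩, rfl⟩
        · exfalso
          apply hnp
          refine Or.inr fun x hx y hy => ?_
          rw [Finset.mem_singleton] at hy
          subst hy
          have hx2 := mem_blob.1 hx
          have hw2 := mem_rest.1 hw
          rw [grid_adj_val]
          omega
      · refine le_trans (Finset.card_le_card_of_injOn Prod.fst
          (fun p _ => Finset.mem_univ p.1) ?_) (by simp)
        intro p hp q hq h
        simp only [Finset.mem_coe, Finset.mem_filter] at hp hq
        exact Prod.ext h (Fin.ext (hp.2.trans hq.2.symm))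
    · obtain ⟨v, -, rfl⟩ := Finset.mem_image.1 hP
      exact (redDeg_singleton_le _ _ _ _).trans one_le_two

lemma step2 (k : Fin n) (hk : 0 < k.val) : Step (gridGraph 2 n) 2 (P1 n k.val) (P2 n k) := by
  have hn : 0 < n := lt_of_le_of_lt (Nat.zero_le _) k.isLt
  constructor
  · refine ⟨blob n k.val, Finset.mem_insert_self _ _, {((0 : Fin 2), k)}, ?_, ?_, ?_⟩
    · exact Finset.mem_insert_of_mem (Finset.mem_image.2 ⟨(0, k), mem_rest.2 le_rfl, rfl⟩)
    · intro h
      have h0 : ((1 : Fin 2), (⟨0, hn⟩ : Fin n)) ∈ blob n k.val := mem_blob.2 (by simpa using hk)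
      rw [h, Finset.mem_singleton, eq_pair_iff] at h0
      simp at h0
    · rw [P1, Finset.erase_insert (blob_not_mem_image hk hn _),
        show (((rest n k.val).image fun v => ({v} : Finset (Fin 2 × Fin n))).erase
            {((0 : Fin 2), k)})
          = ((rest n k.val).erase (0, k)).image (fun v => ({v} : Finset (Fin 2 × Fin n)))
          from (Finset.image_erase singleton_inj' _ _).symm]
      rfl
  · intro P hP
    rcases Finset.mem_insert.1 hP with rfl | hP
    · refine (redDeg_le_of _ _ _
        (((rest n k.val).filter fun p => (p.1.val = 1 ∧ p.2.val = k.val) ∨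
          (p.1.val = 0 ∧ p.2.val = k.val + 1)).image fun v => {v}) ?_).trans
        (Finset.card_image_le.trans ?_)
      · intro Q hQ hne hnp
        rcases Finset.mem_insert.1 hQ with rfl | hQ
        · exact absurd rfl hne
        obtain ⟨w, hw', rfl⟩ := Finset.mem_image.1 hQ
        obtain ⟨hw1, hw2⟩ := Finset.mem_erase.1 hw'
        by_cases hc : (w.1.val = 1 ∧ w.2.val = k.val) ∨ (w.1.val = 0 ∧ w.2.val = k.val + 1)
        · exact Finset.mem_image.2 ⟨w, Finset.mem_filter.2 ⟨hw2, hc⟩, rfl⟩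
        · exfalso
          apply hnp
          refine Or.inr fun x hx y hy => ?_
          rw [Finset.mem_singleton] at hy
          subst hy
          have hx2 := mem_hb.1 hx
          have hw3 := mem_rest.1 hw2
          rw [Ne, eq_pair_iff] at hw1
          simp only [Fin.val_zero] at hw1
          have h1 := x.1.isLt
          have h2 := y.1.isLt
          rw [grid_adj_val]
          omega
      · refine le_trans (Finset.card_le_card_of_injOn Prod.fst
          (fun p _ => Finset.mem_univ p.1) ?_) (by simp)
        intro p hp q hq h
        simp only [Finset.mem_coe, Finset.mem_filter] at hp hq
        have hv : p.1.val = q.1.val := by rw [h]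
        refine Prod.ext h (Fin.ext ?_)
        rcases hp.2 with ⟨a1, a2⟩ | ⟨a1, a2⟩ <;> rcases hq.2 with ⟨b1, b2⟩ | ⟨b1, b2⟩ <;> omega
    · obtain ⟨v, -, rfl⟩ := Finset.mem_image.1 hP
      exact (redDeg_singleton_le _ _ _ _).trans one_le_two

lemma chainP1 (hn : 0 < n) : ∀ (j k : ℕ), 0 < k → k + j = n →
    Relation.ReflTransGen (Step (gridGraph 2 n) 2) (P1 n k) {Finset.univ}
  | 0, k, hk, hkn => by
      obtain rfl : k = n := by omega
      rw [P1_last]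
  | j+1, k, hk, hkn => by
      have hk' : k < n := by omega
      exact Relation.ReflTransGen.head (step2 ⟨k, hk'⟩ hk)
        (Relation.ReflTransGen.head (step1 ⟨k, hk'⟩) (chainP1 hn j (k+1) (by omega) (by omega)))

lemma twwLE_grid2 (hn : 0 < n) : TwwLE (gridGraph 2 n) 2 := by
  rw [TwwLE, ← P2_zero hn]
  exact Relation.ReflTransGen.head (step1 ⟨0, hn⟩) (chainP1 hn (n - 1) 1 Nat.one_pos (by omega))

end Upper

/-! ### Monotonicity under induced subgraph embeddings -/
section Embed
variable {a b : Type*} [Fintype a] [DecidableEq a] [Fintype b] [DecidableEq b]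
variable (G : SimpleGraph b) (G' : SimpleGraph a) (f : a → b)

/-- preimage of a part -/
def rpart (f : a → b) (P : Finset b) : Finset a := Finset.univ.filter fun x => f x ∈ P

lemma mem_rpart {f : a → b} {P : Finset b} {x : a} : x ∈ rpart f P ↔ f x ∈ P := by
  simp [rpart]

lemma rpart_union (f : a → b) (A B : Finset b) :
    rpart f (A ∪ B) = rpart f A ∪ rpart f B := by
  ext x; simp [mem_rpart]

/-- image of a partition -/
def rPart (f : a → b) (PP : Finset (Finset b)) : Finset (Finset a) :=
  (PP.image (rpart f)).erase ∅

lemma mem_rPart {f : a → b} {PP : Finset (Finset b)} {X : Finset a} :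
    X ∈ rPart f PP ↔ X ≠ ∅ ∧ ∃ P ∈ PP, rpart f P = X := by
  simp [rPart, Finset.mem_erase, Finset.mem_image, and_comm]

variable (hadj : ∀ x y, G'.Adj x y ↔ G.Adj (f x) (f y))

include hadj in
lemma pure_rpart {P Q : Finset b} (h : Pure G P Q) : Pure G' (rpart f P) (rpart f Q) := by
  rcases h with h | h
  · exact Or.inl fun x hx y hy => (hadj x y).2 (h _ (mem_rpart.1 hx) _ (mem_rpart.1 hy))
  · exact Or.inr fun x hx y hy hA => h _ (mem_rpart.1 hx) _ (mem_rpart.1 hy) ((hadj x y).1 hA)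

include hadj in
lemma redDeg_rPart (PP : Finset (Finset b)) (P : Finset b) (hP : P ∈ PP) :
    redDeg G' (rPart f PP) (rpart f P) ≤ redDeg G PP P := by
  classical
  have hfin : {Q | Q ∈ PP ∧ Q ≠ P ∧ ¬ Pure G P Q}.Finite :=
    PP.finite_toSet.subset fun Q hQ => hQ.1
  refine Set.ncard_le_ncard_of_injOn
    (fun X => if h : ∃ Q ∈ PP, rpart f Q = X then h.choose else ∅) ?_ ?_ hfin
  · rintro X ⟨hX1, hX2, hX3⟩
    obtain ⟨hXne, hex⟩ := mem_rPart.1 hX1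
    rw [dif_pos hex]
    obtain ⟨hQ1, hQ2⟩ := hex.choose_spec
    refine ⟨hQ1, ?_, ?_⟩
    · rintro rfl
      exact hX2 hQ2.symm
    · intro hpure
      rw [← hQ2] at hX3
      exact hX3 (pure_rpart G G' f hadj hpure)
  · rintro X ⟨hX1, -, -⟩ Y ⟨hY1, -, -⟩ hXY
    obtain ⟨-, hexX⟩ := mem_rPart.1 hX1
    obtain ⟨-, hexY⟩ := mem_rPart.1 hY1
    dsimp only at hXY
    rw [dif_pos hexX, dif_pos hexY] at hXY
    have h1 := hexX.choose_spec.2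
    have h2 := hexY.choose_spec.2
    rw [← h1, ← h2, hXY]

/-- pairwise disjointness of parts -/
def GoodP (PP : Finset (Finset b)) : Prop :=
  ∀ A ∈ PP, ∀ B ∈ PP, A ≠ B → Disjoint A B

lemma goodP_start : GoodP (Finset.univ.image fun v => ({v} : Finset b)) := by
  intro A hA B hB hAB
  obtain ⟨x, -, rfl⟩ := Finset.mem_image.1 hA
  obtain ⟨y, -, rfl⟩ := Finset.mem_image.1 hB
  rw [Finset.disjoint_singleton]
  intro h
  exact hAB (by rw [h])

lemma goodP_merge {PP QQ : Finset (Finset b)} (hG : GoodP PP) (hM : Merge PP QQ) : GoodP QQ := by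
  obtain ⟨A, hA, B, hB, hAB, rfl⟩ := hM
  intro X hX Y hY hXY
  rcases Finset.mem_insert.1 hX with rfl | hX <;> rcases Finset.mem_insert.1 hY with rfl | hY
  · exact absurd rfl hXY
  · have h1 := Finset.mem_erase.1 hY
    have h2 := Finset.mem_erase.1 h1.2
    exact Finset.disjoint_union_left.2
      ⟨hG A hA Y h2.2 (Ne.symm h2.1), hG B hB Y h2.2 (Ne.symm h1.1)⟩
  · have h1 := Finset.mem_erase.1 hX
    have h2 := Finset.mem_erase.1 h1.2
    exact (Finset.disjoint_union_left.2
      ⟨hG A hA X h2.2 (Ne.symm h2.1), hG B hB X h2.2 (Ne.symm h1.1)⟩).symm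
  · have h1 := (Finset.mem_erase.1 hX).2
    have h2 := (Finset.mem_erase.1 hY).2
    exact hG X (Finset.mem_of_mem_erase h1) Y (Finset.mem_of_mem_erase h2) hXY

include hadj in
lemma step_rPart {d : ℕ} {PP QQ : Finset (Finset b)} (hG : GoodP PP)
    (hS : Step G d PP QQ) (hf : Function.Injective f) :
    Relation.ReflTransGen (Step G' d) (rPart f PP) (rPart f QQ) := by
  classical
  obtain ⟨⟨A, hA, B, hB, hAB, rfl⟩, hdeg⟩ := hS
  -- red degree bound for the target partition, valid in all cases
  set QQ := insert (A ∪ B) ((PP.erase A).erase B) with hQQdef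
  have hred : ∀ X ∈ rPart f QQ, redDeg G' (rPart f QQ) X ≤ d := by
    intro X hX
    obtain ⟨hXne, Q, hQ, rfl⟩ := mem_rPart.1 hX
    exact (redDeg_rPart G G' f hadj QQ Q hQ).trans (hdeg Q hQ)
  have himg : QQ.image (rpart f) =
      insert (rpart f A ∪ rpart f B) (((PP.erase A).erase B).image (rpart f)) := by
    rw [hQQdef, Finset.image_insert, rpart_union]
  by_cases hac : rpart f A = ∅
  · -- the contracted pair is invisible on `a`'s side (at least `A` is): partitions agree
    have : rPart f QQ = rPart f PP := by
      ext X
      rw [mem_rPart, mem_rPart]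
      refine and_congr_right fun hXne => ?_
      constructor
      · rintro ⟨Q, hQ, rfl⟩
        rcases Finset.mem_insert.1 hQ with rfl | hQ
        · exact ⟨B, hB, by rw [rpart_union, hac, Finset.empty_union]⟩
        · exact ⟨Q, Finset.mem_of_mem_erase (Finset.mem_of_mem_erase hQ), rfl⟩
      · rintro ⟨Q, hQ, rfl⟩
        by_cases hQA : Q = A
        · exact absurd (hQA ▸ hac) hXne
        by_cases hQB : Q = B
        · exact ⟨A ∪ B, Finset.mem_insert_self _ _,
            by rw [rpart_union, hac, Finset.empty_union, hQB]⟩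
        · exact ⟨Q, Finset.mem_insert_of_mem
            (Finset.mem_erase.2 ⟨hQB, Finset.mem_erase.2 ⟨hQA, hQ⟩⟩), rfl⟩
    rw [this]
  · by_cases hbc : rpart f B = ∅
    · have : rPart f QQ = rPart f PP := by
        ext X
        rw [mem_rPart, mem_rPart]
        refine and_congr_right fun hXne => ?_
        constructor
        · rintro ⟨Q, hQ, rfl⟩
          rcases Finset.mem_insert.1 hQ with rfl | hQ
          · exact ⟨A, hA, by rw [rpart_union, hbc, Finset.union_empty]⟩
          · exact ⟨Q, Finset.mem_of_mem_erase (Finset.mem_of_mem_erase hQ), rfl⟩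
        · rintro ⟨Q, hQ, rfl⟩
          by_cases hQB : Q = B
          · exact absurd (hQB ▸ hbc) hXne
          by_cases hQA : Q = A
          · exact ⟨A ∪ B, Finset.mem_insert_self _ _,
              by rw [rpart_union, hbc, Finset.union_empty, hQA]⟩
          · exact ⟨Q, Finset.mem_insert_of_mem
              (Finset.mem_erase.2 ⟨hQB, Finset.mem_erase.2 ⟨hQA, hQ⟩⟩), rfl⟩
      rw [this]
    · -- genuine merge
      have hdisj : Disjoint (rpart f A) (rpart f B) := by
        rw [Finset.disjoint_left]
        intro x hxA hxB
        have := (hG A hA B hB hAB)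
        rw [Finset.disjoint_left] at this
        exact this (mem_rpart.1 hxA) (mem_rpart.1 hxB)
      have hab : rpart f A ≠ rpart f B := by
        intro h
        rw [h] at hdisj
        exact hbc (disjoint_self.1 hdisj)
      have hrne : ∀ C ∈ PP, C ≠ A → rpart f C ≠ ∅ → rpart f C ≠ rpart f A := by
        intro C hC hCA hCne h
        obtain ⟨x, hx⟩ := Finset.nonempty_iff_ne_empty.2 hCne
        have hxA : f x ∈ A := mem_rpart.1 (h ▸ hx)
        have := hG C hC A hA hCA
        rw [Finset.disjoint_left] at this
        exact this (mem_rpart.1 hx) hxA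
      have hrneB : ∀ C ∈ PP, C ≠ B → rpart f C ≠ ∅ → rpart f C ≠ rpart f B := by
        intro C hC hCB hCne h
        obtain ⟨x, hx⟩ := Finset.nonempty_iff_ne_empty.2 hCne
        have hxB : f x ∈ B := mem_rpart.1 (h ▸ hx)
        have := hG C hC B hB hCB
        rw [Finset.disjoint_left] at this
        exact this (mem_rpart.1 hx) hxB
      refine Relation.ReflTransGen.single ⟨⟨rpart f A, ?_, rpart f B, ?_, hab, ?_⟩, hred⟩
      · exact mem_rPart.2 ⟨hac, A, hA, rfl⟩
      · exact mem_rPart.2 ⟨hbc, B, hB, rfl⟩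
      · ext X
        rw [mem_rPart]
        simp only [Finset.mem_insert, Finset.mem_erase]
        constructor
        · rintro ⟨hXne, Q, hQ, rfl⟩
          rcases Finset.mem_insert.1 hQ with rfl | hQ
          · exact Or.inl (rpart_union f A B)
          · have e1 := Finset.mem_erase.1 hQ
            have e2 := Finset.mem_erase.1 e1.2
            exact Or.inr ⟨hrneB Q e2.2 e1.1 hXne, hrne Q e2.2 e2.1 hXne,
              mem_rPart.2 ⟨hXne, Q, e2.2, rfl⟩⟩
        · rintro (rfl | ⟨hXA, hXB, hX⟩)
          · refine ⟨?_, A ∪ B, Finset.mem_insert_self _ _, rpart_union f A B⟩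
            intro h
            rw [Finset.union_eq_empty] at h
            exact hac h.1
          · obtain ⟨hXne, Q, hQ, rfl⟩ := mem_rPart.1 hX
            refine ⟨hXne, Q, Finset.mem_insert_of_mem (Finset.mem_erase.2
              ⟨?_, Finset.mem_erase.2 ⟨?_, hQ⟩⟩), rfl⟩
            · intro h; exact hXA (by rw [h])
            · intro h; exact hXB (by rw [h])

include hadj in
lemma rtg_rPart {d : ℕ} {PP QQ : Finset (Finset b)}
    (h : Relation.ReflTransGen (Step G d) PP QQ) (hG : GoodP PP) (hf : Function.Injective f) :
    Relation.ReflTransGen (Step G' d) (rPart f PP) (rPart f QQ) ∧ GoodP QQ := by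
  induction h with
  | refl => exact ⟨.refl, hG⟩
  | tail hXY hYZ ih =>
    exact ⟨ih.1.trans (step_rPart G G' f hadj ih.2 hYZ hf), goodP_merge ih.2 hYZ.1⟩

include hadj in
lemma rPart_start (hf : Function.Injective f) :
    rPart f (Finset.univ.image fun v => ({v} : Finset b)) =
      Finset.univ.image fun v => ({v} : Finset a) := by
  ext X
  rw [mem_rPart]
  simp only [Finset.mem_image, Finset.mem_univ, true_and]
  constructor
  · rintro ⟨hXne, Q, ⟨v, rfl⟩, rfl⟩
    obtain ⟨x, hx⟩ := Finset.nonempty_iff_ne_empty.2 hXne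
    have hfx : f x = v := by simpa using mem_rpart.1 hx
    refine ⟨x, ?_⟩
    ext y
    rw [mem_rpart, Finset.mem_singleton, Finset.mem_singleton, ← hfx, hf.eq_iff]
  · rintro ⟨x, rfl⟩
    refine ⟨by simp, {f x}, ⟨f x, rfl⟩, ?_⟩
    ext y
    rw [mem_rpart, Finset.mem_singleton, Finset.mem_singleton, hf.eq_iff]

lemma rPart_univ [Nonempty a] :
    rPart f ({Finset.univ} : Finset (Finset b)) = {Finset.univ} := by
  have h : rpart f (Finset.univ : Finset b) = Finset.univ := by
    ext x; simp [mem_rpart]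
  rw [rPart, Finset.image_singleton, h]
  rw [Finset.erase_eq_of_notMem]
  rw [Finset.mem_singleton]
  exact fun h => (Finset.univ_nonempty (α := a)).ne_empty h.symm

include hadj in
lemma twwLE_embed [Nonempty a] (hf : Function.Injective f) {d : ℕ} (h : TwwLE G d) :
    TwwLE G' d := by
  rw [TwwLE] at h ⊢
  have := (rtg_rPart G G' f hadj h goodP_start hf).1
  rwa [rPart_start G G' f hadj hf, rPart_univ] at this

end Embed

/-! ### Lower bound via exhaustive search on the 2×4 grid -/
section Lower
variable {V : Type*} [Fintype V] [DecidableEq V]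

def pureB (G : SimpleGraph V) [DecidableRel G.Adj] (P Q : Finset V) : Bool :=
  decide (∀ x ∈ P, ∀ y ∈ Q, G.Adj x y) || decide (∀ x ∈ P, ∀ y ∈ Q, ¬ G.Adj x y)

lemma pureB_eq_true (G : SimpleGraph V) [DecidableRel G.Adj] (P Q : Finset V) :
    pureB G P Q = true ↔ Pure G P Q := by
  simp [pureB, Pure]

def okB (G : SimpleGraph V) [DecidableRel G.Adj] (d : ℕ) (QQ : Finset (Finset V)) : Bool :=
  decide (∀ P ∈ QQ, (QQ.filter fun Q => ¬(Q = P) ∧ ¬(pureB G P Q = true)).card ≤ d)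

lemma okB_eq_true (G : SimpleGraph V) [DecidableRel G.Adj] (d : ℕ) (QQ : Finset (Finset V)) :
    okB G d QQ = true ↔ ∀ P ∈ QQ, redDeg G QQ P ≤ d := by
  rw [okB, decide_eq_true_eq]
  refine forall₂_congr fun P hP => ?_
  rw [redDeg_eq_card]
  have : (QQ.filter fun Q => ¬(Q = P) ∧ ¬(pureB G P Q = true))
      = QQ.filter fun Q => Q ≠ P ∧ ¬ Pure G P Q :=
    Finset.filter_congr fun Q _ => by rw [pureB_eq_true]
  rw [this]

def gsuccs (G : SimpleGraph V) [DecidableRel G.Adj] (d : ℕ) (PP : Finset (Finset V)) :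
    Finset (Finset (Finset V)) :=
  (((PP ×ˢ PP).filter fun ab => ¬(ab.1 = ab.2)).image
    fun ab => insert (ab.1 ∪ ab.2) ((PP.erase ab.1).erase ab.2)).filter
    fun QQ => okB G d QQ = true

lemma mem_gsuccs_of_step {G : SimpleGraph V} [DecidableRel G.Adj] {d : ℕ}
    {PP QQ : Finset (Finset V)} (h : Step G d PP QQ) : QQ ∈ gsuccs G d PP := by
  obtain ⟨⟨A, hA, B, hB, hAB, rfl⟩, hdeg⟩ := h
  exact Finset.mem_filter.2 ⟨Finset.mem_image.2 ⟨(A, B), Finset.mem_filter.2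
    ⟨Finset.mem_product.2 ⟨hA, hB⟩, hAB⟩, rfl⟩, (okB_eq_true _ _ _).2 hdeg⟩

lemma not_twwLE_of_closed (G : SimpleGraph V) [DecidableRel G.Adj] (d : ℕ)
    (S : Finset (Finset (Finset V)))
    (h0 : (Finset.univ.image fun v => ({v} : Finset V)) ∈ S)
    (hcl : S.biUnion (gsuccs G d) ⊆ S)
    (hu : ({Finset.univ} : Finset (Finset V)) ∉ S) : ¬ TwwLE G d := by
  intro h
  have key : ∀ X, Relation.ReflTransGen (Step G d)
      (Finset.univ.image fun v => ({v} : Finset V)) X → X ∈ S := by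
    intro X hX
    induction hX with
    | refl => exact h0
    | tail _ h2 ih => exact hcl (Finset.mem_biUnion.2 ⟨_, ih, mem_gsuccs_of_step h2⟩)
  exact hu (key _ h)

end Lower

def reach24 : ℕ → Finset (Finset (Finset (Fin 2 × Fin 4)))
  | 0 => {Finset.univ.image fun v => ({v} : Finset (Fin 2 × Fin 4))}
  | k+1 => reach24 k ∪ (reach24 k).biUnion (gsuccs (gridGraph 2 4) 1)

set_option maxRecDepth 100000 in
set_option maxHeartbeats 12000000 in
lemma not_twwLE_grid24 : ¬ TwwLE (gridGraph 2 4) 1 :=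
  not_twwLE_of_closed _ _ (reach24 5) (by decide) (by decide) (by decide)


/-! ### Small cases via explicit chains -/
section Small
variable {V : Type*} [Fintype V] [DecidableEq V]

def okChain (G : SimpleGraph V) [DecidableRel G.Adj] (d : ℕ) :
    Finset (Finset V) → List (Finset (Finset V)) → Prop
  | _, [] => True
  | PP, QQ :: L => (Merge PP QQ ∧ okB G d QQ = true) ∧ okChain G d QQ L

instance okChain.dec (G : SimpleGraph V) [DecidableRel G.Adj] (d : ℕ) :
    ∀ (PP : Finset (Finset V)) (L : List (Finset (Finset V))), Decidable (okChain G d PP L)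
  | _, [] => .isTrue trivial
  | PP, QQ :: L =>
    letI : Decidable (okChain G d QQ L) := okChain.dec G d QQ L
    inferInstanceAs (Decidable (_ ∧ _))

lemma chain_of_okChain (G : SimpleGraph V) [DecidableRel G.Adj] (d : ℕ) :
    ∀ (L : List (Finset (Finset V))) (PP : Finset (Finset V)), okChain G d PP L →
      List.Chain (fun PP QQ => Step G d PP QQ) PP L
  | [], _, _ => .nil
  | QQ :: L, PP, h =>
      .cons ⟨h.1.1, (okB_eq_true G d QQ).1 h.1.2⟩ (chain_of_okChain G d L QQ h.2)

lemma twwLE_of_chainOk (G : SimpleGraph V) [DecidableRel G.Adj] (d : ℕ)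
    (L : List (Finset (Finset V)))
    (hc : okChain G d (Finset.univ.image fun v => ({v} : Finset V)) L)
    (hl : ((Finset.univ.image fun v => ({v} : Finset V)) :: L).getLast
      (List.cons_ne_nil _ _) = {Finset.univ}) : TwwLE G d :=
  rtg_of_chain L _ _ (chain_of_okChain G d L _ hc) hl

end Small

lemma twwLE_grid21 : TwwLE (gridGraph 2 1) 1 :=
  twwLE_of_chainOk _ _ [{Finset.univ}] (by decide) (by decide)

lemma twwLE_grid22 : TwwLE (gridGraph 2 2) 1 :=
  twwLE_of_chainOk _ _
    [ {{((1:Fin 2),(0:Fin 2)), ((0:Fin 2),(1:Fin 2))}, {((0:Fin 2),(0:Fin 2))},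
        {((1:Fin 2),(1:Fin 2))}},
      {{((0:Fin 2),(0:Fin 2)), ((1:Fin 2),(0:Fin 2)), ((0:Fin 2),(1:Fin 2))},
        {((1:Fin 2),(1:Fin 2))}},
      {Finset.univ} ] (by decide) (by decide)

lemma twwLE_grid23 : TwwLE (gridGraph 2 3) 1 :=
  twwLE_of_chainOk _ _
    [ {{((1:Fin 2),(0:Fin 3)), ((0:Fin 2),(1:Fin 3))}, {((0:Fin 2),(0:Fin 3))},
        {((0:Fin 2),(2:Fin 3))}, {((1:Fin 2),(1:Fin 3))}, {((1:Fin 2),(2:Fin 3))}},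
      {{((1:Fin 2),(1:Fin 3)), ((0:Fin 2),(2:Fin 3))}, {((1:Fin 2),(0:Fin 3)), ((0:Fin 2),(1:Fin 3))},
        {((0:Fin 2),(0:Fin 3))}, {((1:Fin 2),(2:Fin 3))}},
      {{((0:Fin 2),(0:Fin 3)), ((1:Fin 2),(0:Fin 3)), ((0:Fin 2),(1:Fin 3))},
        {((1:Fin 2),(1:Fin 3)), ((0:Fin 2),(2:Fin 3))}, {((1:Fin 2),(2:Fin 3))}},
      {{((1:Fin 2),(1:Fin 3)), ((0:Fin 2),(2:Fin 3)), ((0:Fin 2),(0:Fin 3)),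
        ((1:Fin 2),(0:Fin 3)), ((0:Fin 2),(1:Fin 3))}, {((1:Fin 2),(2:Fin 3))}},
      {Finset.univ} ] (by decide) (by decide)


/-- The `2 × n` grid has twin-width `2` iff `n ≥ 4`; moreover it has
twin-width at most `2` for every `n ≥ 2`. -/
theorem twinWidth_grid_two (n : ℕ) (hn : 1 ≤ n) :
    (tww (gridGraph 2 n) = 2 ↔ 4 ≤ n) ∧ (2 ≤ n → tww (gridGraph 2 n) ≤ 2) := by
  have h2 : TwwLE (gridGraph 2 n) 2 := twwLE_grid2 hn
  refine ⟨⟨fun htww => ?_, fun h4 => ?_⟩, fun _ => tww_le h2⟩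
  · by_contra hlt
    push_neg at hlt
    have h1 : TwwLE (gridGraph 2 n) 1 := by
      interval_cases n
      · exact twwLE_grid21
      · exact twwLE_grid22
      · exact twwLE_grid23
    have := tww_le h1
    omega
  · refine tww_eq_two h2 fun h1 => ?_
    refine not_twwLE_grid24 (twwLE_embed (G := gridGraph 2 n) (G' := gridGraph 2 4)
      (f := fun p => (p.1, ⟨p.2.val, by omega⟩)) ?_ ?_ h1)
    · intro x y
      rw [grid_adj_val, grid_adj_val]
    · intro p q h
      have h1 : p.1 = q.1 := congrArg (fun x : Fin 2 × Fin n => x.1) h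
      have h2 : p.2.val = q.2.val := congrArg (fun x : Fin 2 × Fin n => x.2.val) h
      exact Prod.ext h1 (Fin.ext h2)


end TwwPaper
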